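/- (Element bubble inverse estimate.) Let d ≥ 1 and k ≥ 0 be integers. There exists a constant γ₂ > 0, depending only on d and k, such that for every h > 0 and every polynomial function q : ℝ^d → ℝ of total degree at most k, ‖∇(ψ_h q)‖_{L²((0,h)^d)} ≤ γ₂ h^{−1} ‖q‖_{L²((0,h)^d)}, where ψ_h is the element bubble function of the cube (0,h)^d, defined by ψ_h(x) := ∏_{i=1}^d 4 (x_i/h)(1 − x_i/h), and ∇ denotes the gradient. -/

import Mathlib

open MeasureTheory

section BubbleAux

open MvPolynomial Pointwise

noncomputable section

/-- Unit cube `(0,1)^d`. -/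
def Q1 (d : ℕ) : Set (Fin d → ℝ) := Set.univ.pi fun _ => Set.Ioo (0:ℝ) 1

/-- Bubble polynomial for cube of side `h`. -/
def Bh (d : ℕ) (h : ℝ) : MvPolynomial (Fin d) ℝ :=
  ∏ j : Fin d, C 4 * (C h⁻¹ * X j) * (1 - C h⁻¹ * X j)

/-- The scaling substitution `X i ↦ h • X i`. -/
def scaleSub (d : ℕ) (h : ℝ) : MvPolynomial (Fin d) ℝ →ₐ[ℝ] MvPolynomial (Fin d) ℝ :=
  bind₁ fun j => C h * X j

variable {d : ℕ}

lemma hasFDerivAt_eval (d : ℕ) (p : MvPolynomial (Fin d) ℝ) (x : Fin d → ℝ) :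
    HasFDerivAt (fun y => eval y p)
      (∑ i : Fin d, MvPolynomial.eval x (pderiv i p) • ContinuousLinearMap.proj (R := ℝ)
        (φ := fun _ : Fin d => ℝ) i) x := by
  induction p using MvPolynomial.induction_on with
  | C a => simpa using hasFDerivAt_const a x
  | add p q hp hq =>
      have hfun : (fun y : Fin d → ℝ => eval y (p + q))
          = fun y => eval y p + eval y q := funext fun y => by simp
      have hder : (∑ i : Fin d, MvPolynomial.eval x (pderiv i (p + q)) • ContinuousLinearMap.proj
            (R := ℝ) (φ := fun _ : Fin d => ℝ) i)
          = (∑ i : Fin d, MvPolynomial.eval x (pderiv i p) • ContinuousLinearMap.proj i)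
            + (∑ i : Fin d, MvPolynomial.eval x (pderiv i q) • ContinuousLinearMap.proj i) := by
        rw [← Finset.sum_add_distrib]
        exact Finset.sum_congr rfl fun i _ => by simp [add_smul]
      rw [hfun, hder]
      exact hp.add hq
  | mul_X p j hp =>
      have hXj : HasFDerivAt (fun y : Fin d → ℝ => y j)
          (ContinuousLinearMap.proj (R := ℝ) (φ := fun _ : Fin d => ℝ) j) x :=
        (ContinuousLinearMap.proj (R := ℝ) (φ := fun _ : Fin d => ℝ) j).hasFDerivAt
      have h2 := hp.mul hXj
      have hfun : (fun y : Fin d → ℝ => eval y (p * X j))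
          = fun y => eval y p * y j := funext fun y => by simp
      rw [hfun]
      refine h2.congr_fderiv (Eq.symm ?_)
      ext v
      simp only [pderiv_mul, pderiv_X, map_add, map_mul, eval_X, ContinuousLinearMap.sum_apply,
        ContinuousLinearMap.smul_apply, ContinuousLinearMap.proj_apply,
        ContinuousLinearMap.add_apply, smul_eq_mul, Pi.single_apply, map_one, map_zero,
        mul_ite, mul_one, mul_zero, ite_mul, zero_mul, add_mul, apply_ite (eval x)]
      rw [Finset.sum_add_distrib, Finset.sum_ite_eq Finset.univ j (fun i => eval x p * v i)]
      simp only [Finset.mem_univ, if_true]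
      rw [Finset.mul_sum, add_comm]
      congr 1
      exact Finset.sum_congr rfl fun i _ => by ring

lemma fderiv_eval_single (p : MvPolynomial (Fin d) ℝ) (x : Fin d → ℝ) (i : Fin d) :
    fderiv ℝ (fun y => eval y p) x (Pi.single i 1) = eval x (pderiv i p) := by
  rw [(hasFDerivAt_eval d p x).fderiv]
  simp only [ContinuousLinearMap.coe_sum', Finset.sum_apply, ContinuousLinearMap.smul_apply,
    ContinuousLinearMap.proj_apply, Pi.single_apply, smul_eq_mul, mul_ite, mul_one, mul_zero]
  simp [Finset.sum_ite_eq]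

lemma eval_scaleSub (h : ℝ) (p : MvPolynomial (Fin d) ℝ) (y : Fin d → ℝ) :
    eval y (scaleSub d h p) = eval (h • y) p := by
  have h1 : (eval y : MvPolynomial (Fin d) ℝ →+* ℝ) = eval₂Hom (RingHom.id ℝ) y := rfl
  have h2 := eval₂Hom_bind₁ (RingHom.id ℝ) y (fun j : Fin d => C h * X j) p
  rw [scaleSub, h1]
  rw [h2]
  have : (fun i : Fin d => eval₂Hom (RingHom.id ℝ) y (C h * X i)) = h • y := by
    funext i; simp
  rw [this]
  rfl

lemma pderiv_scaleSub (h : ℝ) (i : Fin d) (p : MvPolynomial (Fin d) ℝ) :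
    pderiv i (scaleSub d h p) = C h * scaleSub d h (pderiv i p) := by
  induction p using MvPolynomial.induction_on with
  | C a => simp [scaleSub]
  | add p q hp hq => simp only [map_add, hp, hq]; ring
  | mul_X p j hp =>
      simp only [scaleSub] at hp ⊢
      rw [map_mul, bind₁_X_right, pderiv_mul, hp, pderiv_C_mul, pderiv_mul, map_add, map_mul,
        map_mul, bind₁_X_right]
      simp only [pderiv_X, Pi.single_apply, apply_ite (bind₁ fun j : Fin d => C h * X j),
        map_one, map_zero]
      split <;> ring

lemma scaleSub_monomial (h : ℝ) (m : Fin d →₀ ℕ) (a : ℝ) :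
    scaleSub d h (monomial m a) = monomial m (a * h ^ (m.sum fun _ e => e)) := by
  rw [scaleSub, bind₁_monomial, monomial_eq]
  simp only [mul_pow, Finset.prod_mul_distrib, Finsupp.sum, Finsupp.prod, ← C_pow]
  rw [← map_prod C (fun x => h ^ m x) m.support, Finset.prod_pow_eq_pow_sum]
  rw [← mul_assoc, ← C_mul]

lemma totalDegree_scaleSub_le (h : ℝ) (p : MvPolynomial (Fin d) ℝ) :
    (scaleSub d h p).totalDegree ≤ p.totalDegree := by
  conv_lhs => rw [p.as_sum]
  rw [map_sum]
  refine (totalDegree_finset_sum _ _).trans (Finset.sup_le fun m hm => ?_)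
  rw [scaleSub_monomial]
  exact (totalDegree_monomial_le _ _).trans (le_totalDegree hm)

lemma quad_bound (n : ℕ) (hn : 0 < n) (F G : (Fin n → ℝ) → ℝ)
    (hFc : Continuous F) (hGc : Continuous G)
    (hFh : ∀ (t : ℝ) c, F (t • c) = t ^ 2 * F c)
    (hGh : ∀ (t : ℝ) c, G (t • c) = t ^ 2 * G c)
    (hFnn : ∀ c, 0 ≤ F c)
    (hGpos : ∀ c, c ≠ 0 → 0 < G c) :
    ∃ C : ℝ, 0 < C ∧ ∀ c, F c ≤ C * G c := by
  have hne : (Metric.sphere (0 : Fin n → ℝ) 1).Nonempty := by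
    haveI : Nonempty (Fin n) := ⟨⟨0, hn⟩⟩
    refine ⟨fun _ => 1, ?_⟩
    have : ‖(fun _ => 1 : Fin n → ℝ)‖ = 1 := by
      rw [pi_norm_const (1:ℝ)]; simp
    simp [this]
  have hcpt : IsCompact (Metric.sphere (0 : Fin n → ℝ) 1) := isCompact_sphere 0 1
  obtain ⟨cA, _, hA⟩ := hcpt.exists_isMaxOn hne hFc.continuousOn
  obtain ⟨cm, hcmS, hm⟩ := hcpt.exists_isMinOn hne hGc.continuousOn
  set A := F cA with hAdef
  set m := G cm with hmdef
  have hmpos : 0 < m := by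
    apply hGpos
    intro h0
    have : ‖cm‖ = 1 := by simpa using hcmS
    rw [h0] at this; simp at this
  have hA0 : 0 ≤ A := hFnn cA
  refine ⟨A / m + 1, by positivity, fun c => ?_⟩
  rcases eq_or_ne c 0 with rfl | hc
  · have hF0 : F 0 = 0 := by
      have := hFh 0 0; simpa using this
    have hG0 : G 0 = 0 := by
      have := hGh 0 0; simpa using this
    simp [hF0, hG0]
  · set t := ‖c‖ with ht
    have htpos : 0 < t := norm_pos_iff.2 hc
    set u := t⁻¹ • c with hu
    have huS : u ∈ Metric.sphere (0 : Fin n → ℝ) 1 := by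
      have habs : |t| = t := abs_of_pos htpos
      simp only [hu, mem_sphere_iff_norm, sub_zero, norm_smul, norm_inv, Real.norm_eq_abs, habs]
      rw [← ht, inv_mul_cancel₀ htpos.ne']
    have hcu : c = t • u := by rw [hu, smul_inv_smul₀ htpos.ne']
    have h1 : F c = t ^ 2 * F u := by rw [hcu, hFh]
    have h2 : G c = t ^ 2 * G u := by rw [hcu, hGh]
    have h3 : F u ≤ A := hA huS
    have h4 : m ≤ G u := hm huS
    have h5 : A / m * m = A := div_mul_cancel₀ A hmpos.ne'
    have hGu : 0 < G u := hmpos.trans_le h4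
    have key : F u ≤ (A / m + 1) * G u := by
      nlinarith [mul_le_mul_of_nonneg_left h4 (div_nonneg hA0 hmpos.le)]
    calc F c = t ^ 2 * F u := h1
      _ ≤ t ^ 2 * ((A / m + 1) * G u) := by nlinarith [sq_nonneg t]
      _ = (A / m + 1) * G c := by rw [h2]; ring

lemma measurableSet_Q1 : MeasurableSet (Q1 d) :=
  MeasurableSet.univ_pi fun _ => measurableSet_Ioo

lemma integrableOn_Q1 {f : (Fin d → ℝ) → ℝ} (hf : Continuous f) : IntegrableOn f (Q1 d) := by
  have hc : IsCompact (Set.univ.pi fun _ : Fin d => Set.Icc (0:ℝ) 1) :=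
    isCompact_univ_pi fun _ => isCompact_Icc
  exact (hf.continuousOn.integrableOn_compact hc).mono_set
    (Set.pi_mono fun i _ => Set.Ioo_subset_Icc_self)

lemma continuous_evalp (p : MvPolynomial (Fin d) ℝ) : Continuous fun x : Fin d → ℝ => eval x p :=
  p.continuous_eval

lemma exists_eval_ne_of_ne_zero {q : MvPolynomial (Fin d) ℝ} (hq : q ≠ 0) :
    ∃ y ∈ Q1 d, eval y q ≠ 0 := by
  by_contra hcon
  push_neg at hcon
  have han : AnalyticOnNhd ℝ (fun x : Fin d → ℝ => eval x q) Set.univ :=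
    AnalyticOnNhd.eval_continuousLinearMap (ContinuousLinearMap.id ℝ (Fin d → ℝ)) q
  have hopen : IsOpen (Q1 d) := isOpen_set_pi Set.finite_univ fun _ _ => isOpen_Ioo
  have hz : (fun _ : Fin d => (1:ℝ)/2) ∈ Q1 d := by
    intro i _; constructor <;> norm_num
  have hev : (fun x : Fin d → ℝ => eval x q) =ᶠ[nhds (fun _ : Fin d => (1:ℝ)/2)] 0 := by
    filter_upwards [hopen.mem_nhds hz] with y hy
    exact hcon y hy
  have := han.eqOn_zero_of_preconnected_of_eventuallyEq_zero isPreconnected_univ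
    (Set.mem_univ _) hev
  apply hq
  apply MvPolynomial.funext
  intro x
  simpa using this (Set.mem_univ x)

lemma N2_pos {q : MvPolynomial (Fin d) ℝ} (hq : q ≠ 0) :
    0 < ∫ x in Q1 d, (eval x q) ^ 2 := by
  obtain ⟨y, hy, hyne⟩ := exists_eval_ne_of_ne_zero hq
  rw [setIntegral_pos_iff_support_of_nonneg_ae]
  · have hopen : IsOpen (Q1 d) := isOpen_set_pi Set.finite_univ fun _ _ => isOpen_Ioo
    have hsub : (Q1 d ∩ {x | eval x q ≠ 0}) ⊆ (Function.support fun x => (eval x q) ^ 2) ∩ Q1 d := by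
      rintro x ⟨hx1, hx2⟩
      exact ⟨by simp [Function.mem_support, pow_eq_zero_iff]; exact hx2, hx1⟩
    have hopen2 : IsOpen (Q1 d ∩ {x | eval x q ≠ 0}) :=
      hopen.inter (isOpen_ne_fun (continuous_evalp q) continuous_const)
    refine lt_of_lt_of_le (hopen2.measure_pos volume ⟨y, hy, hyne⟩) (measure_mono hsub)
  · filter_upwards with x; positivity
  · exact (integrableOn_Q1 (by continuity)).mono_set (le_refl _)

set_option maxHeartbeats 1000000 in
set_option synthInstance.maxHeartbeats 400000 in
theorem main_unit (d k : ℕ) : ∃ C : ℝ, 0 < C ∧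
    ∀ q : MvPolynomial (Fin d) ℝ, q.totalDegree ≤ k →
      (∫ x in Q1 d, ∑ i : Fin d, (eval x (pderiv i (Bh d 1 * q))) ^ 2)
        ≤ C * ∫ x in Q1 d, (eval x q) ^ 2 := by
  classical
  set V := restrictTotalDegree (Fin d) ℝ k with hV
  haveI : Nontrivial V := by
    refine ⟨⟨1, ?_⟩, 0, ?_⟩
    · rw [mem_restrictTotalDegree]; simp
    · intro hcon
      rw [Submodule.mk_eq_zero] at hcon
      exact one_ne_zero hcon
  haveI : Module.Free ℝ V := Module.Free.of_divisionRing ℝ V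
  have hn : 0 < Module.finrank ℝ V := Module.finrank_pos
  set n := Module.finrank ℝ V with hndef
  let b : Module.Basis (Fin n) ℝ V := Module.finBasis ℝ V
  let p : Fin n → MvPolynomial (Fin d) ℝ := fun j => (b j : MvPolynomial (Fin d) ℝ)
  let Gf : Fin d → MvPolynomial (Fin d) ℝ → (Fin d → ℝ) → ℝ :=
    fun i r x => eval x (pderiv i (Bh d 1 * r))
  have contGf : ∀ i r, Continuous (Gf i r) := fun i r => MvPolynomial.continuous_eval _
  have hlin : ∀ (c : Fin n → ℝ) (i : Fin d) (x : Fin d → ℝ),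
      eval x (pderiv i (Bh d 1 * (∑ j : Fin n, c j • p j))) = ∑ j : Fin n, c j * Gf i (p j) x := by
    intro c i x
    rw [Finset.mul_sum, map_sum, map_sum]
    refine Finset.sum_congr rfl fun j _ => ?_
    rw [mul_smul_comm, Derivation.map_smul, MvPolynomial.smul_eval]
  have hevallin : ∀ (c : Fin n → ℝ) (x : Fin d → ℝ),
      eval x (∑ j : Fin n, c j • p j) = ∑ j : Fin n, c j * eval x (p j) := by
    intro c x
    rw [map_sum]
    exact Finset.sum_congr rfl fun j _ => MvPolynomial.smul_eval _ _ _
  set A : Fin n → Fin n → ℝ :=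
    fun j l => ∫ x in Q1 d, ∑ i : Fin d, Gf i (p j) x * Gf i (p l) x with hA
  set M : Fin n → Fin n → ℝ :=
    fun j l => ∫ x in Q1 d, eval x (p j) * eval x (p l) with hM
  have rep1 : ∀ c : Fin n → ℝ,
      (∫ x in Q1 d, ∑ i : Fin d, (eval x (pderiv i (Bh d 1 * (∑ j : Fin n, c j • p j)))) ^ 2)
        = ∑ j : Fin n, ∑ l : Fin n, c j * c l * A j l := by
    intro c
    have hpt : ∀ x : Fin d → ℝ,
        (∑ i : Fin d, (eval x (pderiv i (Bh d 1 * (∑ j : Fin n, c j • p j)))) ^ 2)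
          = ∑ j : Fin n, ∑ l : Fin n, c j * c l * ∑ i : Fin d, Gf i (p j) x * Gf i (p l) x := by
      intro x
      have h1 : ∀ i : Fin d, (eval x (pderiv i (Bh d 1 * (∑ j : Fin n, c j • p j)))) ^ 2
          = ∑ j : Fin n, ∑ l : Fin n, (c j * Gf i (p j) x) * (c l * Gf i (p l) x) := by
        intro i
        rw [hlin, sq, Fintype.sum_mul_sum]
      rw [Finset.sum_congr rfl fun i _ => h1 i, Finset.sum_comm]
      refine Finset.sum_congr rfl fun j _ => ?_
      rw [Finset.sum_comm]
      refine Finset.sum_congr rfl fun l _ => ?_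
      rw [Finset.mul_sum]
      exact Finset.sum_congr rfl fun i _ => by ring
    simp only [hpt]
    rw [integral_finset_sum _ (fun j _ => ?_)]
    · refine Finset.sum_congr rfl fun j _ => ?_
      rw [integral_finset_sum _ (fun l _ => ?_)]
      · refine Finset.sum_congr rfl fun l _ => ?_
        rw [integral_const_mul]
      · exact (integrableOn_Q1 (by
          exact continuous_const.mul (continuous_finset_sum _ fun i _ =>
            (contGf i (p j)).mul (contGf i (p l)))))
    · exact integrable_finset_sum _ fun l _ => integrableOn_Q1 (by
        exact continuous_const.mul (continuous_finset_sum _ fun i _ =>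
          (contGf i (p j)).mul (contGf i (p l))))
  have rep2 : ∀ c : Fin n → ℝ,
      (∫ x in Q1 d, (eval x (∑ j : Fin n, c j • p j)) ^ 2)
        = ∑ j : Fin n, ∑ l : Fin n, c j * c l * M j l := by
    intro c
    have hpt : ∀ x : Fin d → ℝ,
        (eval x (∑ j : Fin n, c j • p j)) ^ 2
          = ∑ j : Fin n, ∑ l : Fin n, c j * c l * (eval x (p j) * eval x (p l)) := by
      intro x
      rw [hevallin, sq, Fintype.sum_mul_sum]
      refine Finset.sum_congr rfl fun j _ => Finset.sum_congr rfl fun l _ => by ring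
    simp only [hpt]
    rw [integral_finset_sum _ (fun j _ => ?_)]
    · refine Finset.sum_congr rfl fun j _ => ?_
      rw [integral_finset_sum _ (fun l _ => ?_)]
      · refine Finset.sum_congr rfl fun l _ => ?_
        rw [integral_const_mul]
      · exact integrableOn_Q1 (continuous_const.mul
          ((MvPolynomial.continuous_eval _).mul (MvPolynomial.continuous_eval _)))
    · exact integrable_finset_sum _ fun l _ => integrableOn_Q1 (continuous_const.mul
        ((MvPolynomial.continuous_eval _).mul (MvPolynomial.continuous_eval _)))
  set F : (Fin n → ℝ) → ℝ := fun c => ∑ j : Fin n, ∑ l : Fin n, c j * c l * A j l with hF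
  set G : (Fin n → ℝ) → ℝ := fun c => ∑ j : Fin n, ∑ l : Fin n, c j * c l * M j l with hG
  have hcoe : ∀ c : Fin n → ℝ,
      ((∑ j : Fin n, c j • b j : V) : MvPolynomial (Fin d) ℝ) = ∑ j : Fin n, c j • p j := by
    intro c
    rw [Submodule.coe_sum]
    rfl
  obtain ⟨C, hCpos, hC⟩ := quad_bound n hn F G
    (continuous_finset_sum _ fun j _ => continuous_finset_sum _ fun l _ =>
      ((continuous_apply j).mul (continuous_apply l)).mul continuous_const)
    (continuous_finset_sum _ fun j _ => continuous_finset_sum _ fun l _ =>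
      ((continuous_apply j).mul (continuous_apply l)).mul continuous_const)
    (by
      intro t c
      simp only [hF, Pi.smul_apply, smul_eq_mul, Finset.mul_sum]
      exact Finset.sum_congr rfl fun j _ => Finset.sum_congr rfl fun l _ => by ring)
    (by
      intro t c
      simp only [hG, Pi.smul_apply, smul_eq_mul, Finset.mul_sum]
      exact Finset.sum_congr rfl fun j _ => Finset.sum_congr rfl fun l _ => by ring)
    (by
      intro c
      show 0 ≤ ∑ j : Fin n, ∑ l : Fin n, c j * c l * A j l
      rw [← rep1 c]
      apply setIntegral_nonneg measurableSet_Q1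
      intro x _
      positivity)
    (by
      intro c hc
      have hqc : (∑ j : Fin n, c j • p j) ≠ 0 := by
        intro h0
        apply hc
        have hv : (∑ j : Fin n, c j • b j : V) = 0 := by
          apply Subtype.coe_injective
          show ((∑ j : Fin n, c j • b j : V) : MvPolynomial (Fin d) ℝ) = _
          rw [hcoe c, h0]
          rfl
        have := b.repr_sum_self c
        rw [hv] at this
        simp only [map_zero] at this
        funext j
        have := congrFun (congrArg (fun f => (f : Fin n → ℝ)) this) j
        simpa using this.symm
      show 0 < ∑ j : Fin n, ∑ l : Fin n, c j * c l * M j l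
      rw [← rep2 c]
      exact N2_pos hqc)
  refine ⟨C, hCpos, fun q hq => ?_⟩
  have hqV : q ∈ V := (mem_restrictTotalDegree _ k q).2 hq
  set c : Fin n → ℝ := fun j => b.repr ⟨q, hqV⟩ j with hc
  have hsum : (∑ j : Fin n, c j • p j) = q := by
    rw [← hcoe c]
    have hb : (∑ j : Fin n, c j • b j : V) = ⟨q, hqV⟩ := b.sum_repr ⟨q, hqV⟩
    rw [hb]
  have h1 := rep1 c
  have h2 := rep2 c
  rw [hsum] at h1 h2
  rw [h1, h2]
  exact hC c

lemma hfun_eq (h : ℝ) (q : MvPolynomial (Fin d) ℝ) :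
    (fun y : Fin d → ℝ => (∏ j : Fin d, 4 * (y j / h) * (1 - y j / h)) * eval y q)
      = fun y => eval y (Bh d h * q) := by
  funext y
  rw [map_mul]
  congr 1
  rw [Bh, map_prod]
  refine Finset.prod_congr rfl fun j _ => ?_
  simp [div_eq_inv_mul]

lemma scaleSub_Bh (h : ℝ) (hh : h ≠ 0) : scaleSub d h (Bh d h) = Bh d 1 := by
  rw [Bh, Bh, map_prod]
  refine Finset.prod_congr rfl fun j _ => ?_
  rw [scaleSub]
  simp only [map_mul, map_sub, map_one, bind₁_C_right, bind₁_X_right]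
  rw [← mul_assoc (C h⁻¹), ← C_mul, inv_mul_cancel₀ hh]
  simp [mul_assoc]

lemma cov (h : ℝ) (hh : 0 < h) (f : (Fin d → ℝ) → ℝ) :
    ∫ x in Set.univ.pi (fun _ : Fin d => Set.Ioo (0:ℝ) h), f x
      = (h ^ d) * ∫ x in Q1 d, f (h • x) := by
  have hD : (h • Q1 d) = Set.univ.pi fun _ : Fin d => Set.Ioo (0:ℝ) h := by
    rw [Q1, smul_pi₀ _ _ hh.ne']
    have hfa : (h • fun _ : Fin d => Set.Ioo (0:ℝ) 1) = fun _ : Fin d => Set.Ioo (0:ℝ) h := by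
      funext i
      rw [Pi.smul_apply, LinearOrderedField.smul_Ioo hh]
      simp
    rw [hfa]
  have hcs := Measure.setIntegral_comp_smul_of_pos (μ := volume) f (Q1 d) hh
  rw [hD, Module.finrank_fin_fun, smul_eq_mul] at hcs
  rw [hcs, ← mul_assoc, mul_inv_cancel₀ (pow_ne_zero d hh.ne'), one_mul]

end
end BubbleAux

open MvPolynomial in
/-- Element bubble inverse estimate: there is `γ₂ > 0` depending only on `d`
and `k` such that for all `h > 0` and all polynomials `q` of total degree at
most `k`, `‖∇(ψ_h q)‖_{L²((0,h)^d)} ≤ γ₂ h⁻¹ ‖q‖_{L²((0,h)^d)}`, where the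
squared Euclidean norm of the gradient is the sum of the squared partial
derivatives. -/
theorem stmt_11 (d k : ℕ) (hd : 1 ≤ d) :
    ∃ γ₂ : ℝ, 0 < γ₂ ∧
      ∀ h : ℝ, 0 < h →
        ∀ q : MvPolynomial (Fin d) ℝ, q.totalDegree ≤ k →
          Real.sqrt (∫ x in Set.univ.pi (fun _ : Fin d => Set.Ioo (0:ℝ) h),
              ∑ i : Fin d,
                (fderiv ℝ
                    (fun y : Fin d → ℝ =>
                      (∏ j : Fin d, 4 * (y j / h) * (1 - y j / h)) *
                        MvPolynomial.eval y q)
                    x (Pi.single i 1)) ^ 2) ≤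
            γ₂ * h⁻¹ *
              Real.sqrt (∫ x in Set.univ.pi (fun _ : Fin d => Set.Ioo (0:ℝ) h),
                (MvPolynomial.eval x q) ^ 2) := by
  obtain ⟨C₀, hC₀pos, hC₀⟩ := main_unit d k
  refine ⟨Real.sqrt C₀, Real.sqrt_pos.2 hC₀pos, fun h hh q hq => ?_⟩
  have hh' : h ≠ 0 := hh.ne'
  rw [hfun_eq h q]
  simp only [fderiv_eval_single]
  set q' := scaleSub d h q with hq'def
  have hq'deg : q'.totalDegree ≤ k := le_trans (totalDegree_scaleSub_le h q) hq
  have hkey : ∀ (i : Fin d) (x : Fin d → ℝ),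
      eval (h • x) (pderiv i (Bh d h * q)) = h⁻¹ * eval x (pderiv i (Bh d 1 * q')) := by
    intro i x
    rw [← eval_scaleSub]
    have h1 : scaleSub d h (pderiv i (Bh d h * q))
        = C h⁻¹ * pderiv i (scaleSub d h (Bh d h * q)) := by
      rw [pderiv_scaleSub, ← mul_assoc, ← C_mul, inv_mul_cancel₀ hh', C_1, one_mul]
    rw [h1, map_mul, eval_C, map_mul, scaleSub_Bh h hh']
  rw [cov h hh, cov h hh]
  have hL : (∫ x in Q1 d, ∑ i : Fin d, (eval (h • x) (pderiv i (Bh d h * q))) ^ 2)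
      = h⁻¹ ^ 2 * ∫ x in Q1 d, ∑ i : Fin d, (eval x (pderiv i (Bh d 1 * q'))) ^ 2 := by
    rw [← integral_const_mul]
    simp only [hkey, mul_pow, ← Finset.mul_sum]
  have hR : (∫ x in Q1 d, (eval (h • x) q) ^ 2) = ∫ x in Q1 d, (eval x q') ^ 2 := by
    simp only [hq'def, eval_scaleSub]
  rw [hL, hR]
  set I1 := ∫ x in Q1 d, ∑ i : Fin d, (eval x (pderiv i (Bh d 1 * q'))) ^ 2 with hI1
  set I2 := ∫ x in Q1 d, (eval x q') ^ 2 with hI2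
  have hI1nn : 0 ≤ I1 := setIntegral_nonneg measurableSet_Q1 (fun x _ => by positivity)
  have hI2nn : 0 ≤ I2 := setIntegral_nonneg measurableSet_Q1 (fun x _ => by positivity)
  have hineq : I1 ≤ C₀ * I2 := hC₀ q' hq'deg
  have hsq : Real.sqrt I1 ≤ Real.sqrt C₀ * Real.sqrt I2 := by
    rw [← Real.sqrt_mul hC₀pos.le]
    exact Real.sqrt_le_sqrt hineq
  have hhd : (0:ℝ) ≤ h ^ d := by positivity
  rw [Real.sqrt_mul hhd, Real.sqrt_mul (by positivity : (0:ℝ) ≤ h⁻¹ ^ 2),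
    Real.sqrt_sq (by positivity : (0:ℝ) ≤ h⁻¹), Real.sqrt_mul hhd]
  have hnn : (0:ℝ) ≤ Real.sqrt (h ^ d) * h⁻¹ :=
    mul_nonneg (Real.sqrt_nonneg _) (by positivity)
  calc Real.sqrt (h ^ d) * (h⁻¹ * Real.sqrt I1)
      = Real.sqrt (h ^ d) * h⁻¹ * Real.sqrt I1 := by ring
    _ ≤ Real.sqrt (h ^ d) * h⁻¹ * (Real.sqrt C₀ * Real.sqrt I2) :=
        mul_le_mul_of_nonneg_left hsq hnn
    _ = Real.sqrt C₀ * h⁻¹ * (Real.sqrt (h ^ d) * Real.sqrt I2) := by ring
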